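/- With the same constants M, ε₀, ε and the iteration q₀ ≡ 1, q_{n+1}(z)² = −2∫₀¹ t q_n(zt) dt + 2 − 2z + z²/2 (positive square root) as above, for all n ≥ 0 and 0 ≤ z ≤ ε one has |q_{n+1}(z) − q_n(z)| ≤ M γⁿ z, where γ = 1/(3(1 − Mε)) < 1. -/

import Mathlib

open Set intervalIntegral
open MeasureTheory

lemma sqrt_sub_one_abs {a : ℝ} (ha : 0 ≤ a) : |Real.sqrt a - 1| ≤ |a - 1| := by
  have hs := Real.sq_sqrt ha
  have h0 := Real.sqrt_nonneg a
  calc |Real.sqrt a - 1| = |Real.sqrt a - 1| * 1 := (mul_one _).symm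
    _ ≤ |Real.sqrt a - 1| * |Real.sqrt a + 1| := by
        apply mul_le_mul_of_nonneg_left _ (abs_nonneg _)
        rw [abs_of_nonneg (by linarith)]; linarith
    _ = |a - 1| := by rw [← abs_mul]; congr 1; nlinarith

lemma intbound (f : ℝ → ℝ) (c : ℝ)
    (h : ∀ t ∈ Icc (0:ℝ) 1, |f t| ≤ c * t) :
    |∫ t in (0:ℝ)..1, t * f t| ≤ c / 3 := by
  have hg : IntervalIntegrable (fun t : ℝ => c * t ^ 2) volume 0 1 :=
    (continuous_const.mul (continuous_pow 2)).intervalIntegrable 0 1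
  have hae : ∀ᵐ t ∂volume.restrict (Set.uIoc (0:ℝ) 1), ‖t * f t‖ ≤ c * t ^ 2 := by
    rw [uIoc_of_le (by norm_num : (0:ℝ) ≤ 1)]
    filter_upwards [ae_restrict_mem measurableSet_Ioc] with t ht
    have ht' : t ∈ Icc (0:ℝ) 1 := Ioc_subset_Icc_self ht
    have h1 := h t ht'
    have ht0 : 0 ≤ t := ht'.1
    calc ‖t * f t‖ = t * |f t| := by
          rw [Real.norm_eq_abs, abs_mul, abs_of_nonneg ht0]
      _ ≤ t * (c * t) := mul_le_mul_of_nonneg_left h1 ht0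
      _ = c * t ^ 2 := by ring
  have hb := intervalIntegral.norm_integral_le_of_norm_le (by norm_num : (0:ℝ) ≤ 1)
    ((ae_restrict_iff' measurableSet_Ioc).1 (by rwa [uIoc_of_le (by norm_num : (0:ℝ) ≤ 1)] at hae)) hg
  rw [Real.norm_eq_abs] at hb
  refine hb.trans ?_
  have heq : (∫ t in (0:ℝ)..1, c * t ^ 2) = c / 3 := by
    rw [intervalIntegral.integral_const_mul, integral_pow]; ring
  rw [heq]


theorem stmt_7 (M ε₀ ε : ℝ) (hM : 0 < M) (hε₀ : 0 < ε₀)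
    (h1 : M * ε₀ < 2 / 3)
    (h2 : (2 + ε₀ / 2) * (1 + M * ε₀) ≤ M)
    (h3 : (1 + M * ε₀) * (2 * M / 3 + 2 + ε₀ / 2) ≤ M)
    (hε : ε = min (1 / 4) ε₀)
    (q : ℕ → ℝ → ℝ)
    (hq0 : ∀ z, q 0 z = 1)
    (hqrec : ∀ n : ℕ, ∀ z ∈ Icc (0 : ℝ) ε,
      q (n + 1) z =
        Real.sqrt (-2 * (∫ t in (0 : ℝ)..1, t * q n (z * t)) + 2 - 2 * z + z ^ 2 / 2))
    (hqcont : ∀ n, ContinuousOn (q n) (Icc (0 : ℝ) ε)) :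
    (1 / (3 * (1 - M * ε)) < 1) ∧
    ∀ n : ℕ, ∀ z ∈ Icc (0 : ℝ) ε,
      |q (n + 1) z - q n z| ≤ M * (1 / (3 * (1 - M * ε))) ^ n * z := by
  have hε4 : ε ≤ 1/4 := hε ▸ min_le_left _ _
  have hεε₀ : ε ≤ ε₀ := hε ▸ min_le_right _ _
  have hεpos : 0 < ε := hε ▸ lt_min (by norm_num) hε₀
  have hMε : M * ε < 2/3 := lt_of_le_of_lt (by nlinarith) h1
  have hden : (0:ℝ) < 1 - M * ε := by linarith
  have hγlt : 1 / (3 * (1 - M * ε)) < 1 := by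
    rw [div_lt_one (by linarith)]; linarith
  set γ := 1 / (3 * (1 - M * ε)) with hγdef
  have hγpos : 0 < γ := by rw [hγdef]; positivity
  refine ⟨hγlt, ?_⟩
  have hkey : 2 * M / 3 + 2 + ε₀ / 2 ≤ M := by
    nlinarith [mul_nonneg (mul_nonneg hM.le hε₀.le) (show (0:ℝ) ≤ 2*M/3 + 2 + ε₀/2 by positivity)]
  -- membership helper
  have hmem : ∀ z ∈ Icc (0:ℝ) ε, ∀ t ∈ Icc (0:ℝ) 1, z * t ∈ Icc (0:ℝ) ε := by
    intro z hz t ht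
    refine ⟨mul_nonneg hz.1 ht.1, ?_⟩
    calc z * t ≤ z * 1 := mul_le_mul_of_nonneg_left ht.2 hz.1
      _ = z := mul_one z
      _ ≤ ε := hz.2
  have hcontz : ∀ n, ∀ z ∈ Icc (0:ℝ) ε,
      ContinuousOn (fun t => q n (z * t)) (Icc (0:ℝ) 1) := by
    intro n z hz
    exact (hqcont n).comp ((continuous_const.mul continuous_id).continuousOn)
      (fun t ht => hmem z hz t ht)
  have hInt : ∀ n, ∀ z ∈ Icc (0:ℝ) ε,
      IntervalIntegrable (fun t => q n (z * t)) volume 0 1 := by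
    intro n z hz
    apply ContinuousOn.intervalIntegrable
    rw [uIcc_of_le (by norm_num : (0:ℝ) ≤ 1)]
    exact hcontz n z hz
  have hIntT : ∀ n, ∀ z ∈ Icc (0:ℝ) ε,
      IntervalIntegrable (fun t => t * q n (z * t)) volume 0 1 := by
    intro n z hz
    exact (hInt n z hz).continuousOn_mul continuous_id.continuousOn
  set S : ℕ → ℝ → ℝ := fun n z =>
    -2 * (∫ t in (0:ℝ)..1, t * q n (z * t)) + 2 - 2 * z + z ^ 2 / 2 with hSdef
  have hqS : ∀ n, ∀ z ∈ Icc (0:ℝ) ε, q (n+1) z = Real.sqrt (S n z) := hqrec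
  -- step: pointwise bound on q n gives bound on S n
  have hstep : ∀ n, (∀ w ∈ Icc (0:ℝ) ε, |q n w - 1| ≤ M * w) →
      ∀ z ∈ Icc (0:ℝ) ε, |S n z - 1| ≤ M * z ∧ 0 ≤ S n z := by
    intro n ih z hz
    have hsplit : (∫ t in (0:ℝ)..1, t * q n (z * t))
        = (∫ t in (0:ℝ)..1, t * (q n (z * t) - 1)) + 1/2 := by
      have h2' : IntervalIntegrable (fun t => t * (q n (z*t) - 1)) volume 0 1 :=
        ((hInt n z hz).sub intervalIntegrable_const).continuousOn_mul continuous_id.continuousOn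
      have h3' : IntervalIntegrable (fun t : ℝ => t) volume 0 1 :=
        continuous_id.intervalIntegrable 0 1
      have hc : (∫ t in (0:ℝ)..1, t * q n (z * t))
          = ∫ t in (0:ℝ)..1, (t * (q n (z * t) - 1) + t) := by
        apply intervalIntegral.integral_congr; intro t _; simp; ring
      rw [hc, intervalIntegral.integral_add h2' h3', integral_id]
      norm_num
    have hJ : |∫ t in (0:ℝ)..1, t * (q n (z * t) - 1)| ≤ (M * z) / 3 := by
      apply intbound
      intro t ht
      calc |q n (z*t) - 1| ≤ M * (z * t) := ih (z*t) (hmem z hz t ht)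
        _ = (M * z) * t := by ring
    have habs := abs_le.1 hJ
    have hz2 : z^2 ≤ ε₀ * z := by nlinarith [hz.1, hz.2]
    have hεz : 0 ≤ ε₀ * z := mul_nonneg hε₀.le hz.1
    have hS1 : S n z - 1 = -2 * (∫ t in (0:ℝ)..1, t * (q n (z * t) - 1)) - 2*z + z^2/2 := by
      simp only [hSdef, hsplit]; ring
    have hb : |S n z - 1| ≤ M * z := by
      rw [hS1, abs_le]
      constructor
      · nlinarith [hz.1, mul_le_mul_of_nonneg_right hkey hz.1]
      · nlinarith [hz.1, mul_le_mul_of_nonneg_right hkey hz.1]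
    refine ⟨hb, ?_⟩
    have hMz : M * z ≤ M * ε := mul_le_mul_of_nonneg_left hz.2 hM.le
    have := (abs_le.1 hb).1
    linarith
  -- |q n z - 1| ≤ M z for all n
  have hq1 : ∀ n, ∀ z ∈ Icc (0:ℝ) ε, |q n z - 1| ≤ M * z := by
    intro n
    induction n with
    | zero =>
      intro z hz
      rw [hq0 z]
      simp only [sub_self, abs_zero]
      exact mul_nonneg hM.le hz.1
    | succ n ih =>
      intro z hz
      obtain ⟨hS1, hS0⟩ := hstep n ih z hz
      rw [hqS n z hz]
      exact (sqrt_sub_one_abs hS0).trans hS1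
  have hSfact : ∀ n, ∀ z ∈ Icc (0:ℝ) ε, |S n z - 1| ≤ M * z ∧ 0 ≤ S n z :=
    fun n => hstep n (hq1 n)
  intro n
  induction n with
  | zero =>
    intro z hz
    obtain ⟨hS1, hS0⟩ := hSfact 0 z hz
    rw [hqS 0 z hz, hq0 z, pow_zero]
    calc |Real.sqrt (S 0 z) - 1| ≤ M * z := (sqrt_sub_one_abs hS0).trans hS1
      _ = M * 1 * z := by ring
  | succ n ih =>
    intro z hz
    obtain ⟨hA1, hA0⟩ := hSfact (n+1) z hz
    obtain ⟨hB1, hB0⟩ := hSfact n z hz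
    have hsa := Real.sq_sqrt hA0
    have hsb := Real.sq_sqrt hB0
    have hsa0 := Real.sqrt_nonneg (S (n+1) z)
    have hsb0 := Real.sqrt_nonneg (S n z)
    have hMz : M * z ≤ M * ε := mul_le_mul_of_nonneg_left hz.2 hM.le
    have hqa : |Real.sqrt (S (n+1) z) - 1| ≤ M * z := (sqrt_sub_one_abs hA0).trans hA1
    have hqb : |Real.sqrt (S n z) - 1| ≤ M * z := (sqrt_sub_one_abs hB0).trans hB1
    have hsum : 2 * (1 - M * ε) ≤ Real.sqrt (S (n+1) z) + Real.sqrt (S n z) := by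
      have h1' := (abs_le.1 hqa).1
      have h2' := (abs_le.1 hqb).1
      linarith
    have hdiff : S (n+1) z - S n z
        = -2 * ∫ t in (0:ℝ)..1, t * (q (n+1) (z*t) - q n (z*t)) := by
      have hc : (∫ t in (0:ℝ)..1, t * (q (n+1) (z*t) - q n (z*t)))
          = (∫ t in (0:ℝ)..1, t * q (n+1) (z*t)) - ∫ t in (0:ℝ)..1, t * q n (z*t) := by
        rw [← intervalIntegral.integral_sub (hIntT (n+1) z hz) (hIntT n z hz)]
        apply intervalIntegral.integral_congr; intro t _; simp; ring
      rw [hc]; simp only [hSdef]; ring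
    have hIb : |∫ t in (0:ℝ)..1, t * (q (n+1) (z*t) - q n (z*t))| ≤ (M * γ^n * z) / 3 := by
      apply intbound
      intro t ht
      calc |q (n+1) (z*t) - q n (z*t)| ≤ M * γ^n * (z*t) := ih (z*t) (hmem z hz t ht)
        _ = (M * γ^n * z) * t := by ring
    have hSd : |S (n+1) z - S n z| ≤ 2 * ((M * γ^n * z) / 3) := by
      rw [hdiff, abs_mul]
      calc |(-2:ℝ)| * |∫ t in (0:ℝ)..1, t * (q (n+1) (z*t) - q n (z*t))|
          = 2 * |∫ t in (0:ℝ)..1, t * (q (n+1) (z*t) - q n (z*t))| := by norm_num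
        _ ≤ 2 * ((M * γ^n * z) / 3) := by linarith [hIb]
    rw [hqS (n+1) z hz, hqS n z hz]
    have hprod : |Real.sqrt (S (n+1) z) - Real.sqrt (S n z)|
        * (Real.sqrt (S (n+1) z) + Real.sqrt (S n z)) = |S (n+1) z - S n z| := by
      rw [← abs_of_nonneg (show 0 ≤ Real.sqrt (S (n+1) z) + Real.sqrt (S n z) by linarith),
        ← abs_mul]
      congr 1
      linear_combination hsa - hsb
    have h6 : |Real.sqrt (S (n+1) z) - Real.sqrt (S n z)| * (2 * (1 - M * ε))
        ≤ 2 * ((M * γ^n * z) / 3) := by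
      calc |Real.sqrt (S (n+1) z) - Real.sqrt (S n z)| * (2 * (1 - M * ε))
          ≤ |Real.sqrt (S (n+1) z) - Real.sqrt (S n z)|
            * (Real.sqrt (S (n+1) z) + Real.sqrt (S n z)) :=
            mul_le_mul_of_nonneg_left hsum (abs_nonneg _)
        _ = |S (n+1) z - S n z| := hprod
        _ ≤ 2 * ((M * γ^n * z) / 3) := hSd
    have h7 : |Real.sqrt (S (n+1) z) - Real.sqrt (S n z)|
        ≤ (2 * ((M * γ^n * z) / 3)) / (2 * (1 - M * ε)) :=
      (le_div_iff₀ (by linarith)).2 h6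
    have hγc : γ * (3 * (1 - M * ε)) = 1 := by
      rw [hγdef]; field_simp
    have hfin : (2 * ((M * γ^n * z) / 3)) / (2 * (1 - M * ε)) = M * γ^(n+1) * z := by
      rw [pow_succ, div_eq_iff (show (2 * (1 - M * ε)) ≠ 0 by linarith)]
      linear_combination (-(2/3) * M * γ^n * z) * hγc
    linarith [hfin ▸ h7]
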